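/- arXiv:0704.1747 — 2 statements merged into one kernel-verified Lean document; each statement's English description precedes it below -/
import Mathlib

section
/- Let n ≥ 2 and d ≥ 1, and let V ⊆ (ℂ^×)^n be the common zero set of a finite family of polynomials in ℂ[X_1,…,X_n], each of total degree at most d. Suppose t ∈ ℕ satisfies Σ_{i=0}^{n−1} T^n_i(f) ≤ t for every f ∈ ℂ[X_1,…,X_n] of total degree at most d, and suppose N ∈ ℕ satisfies: for every finite family of polynomials in ℂ[X_1,…,X_{n−1}] of total degree at most n^{2+n}·d², the common zero set of that family in (ℂ^×)^{n−1} contains at most N maximal torsion cosets. Then V contains at most t·N maximal torsion cosets. -/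
open scoped BigOperators

noncomputable section

/-- `x ^ a` coordinatewise: `∏ j, x j ^ a j`. -/
def vpow {n : ℕ} (x : Fin n → ℂˣ) (a : Fin n → ℤ) : ℂˣ := ∏ j, x j ^ a j

/-- A torsion point: every coordinate is a root of unity. -/
def IsTorsionPoint {n : ℕ} (x : Fin n → ℂˣ) : Prop := ∀ j, ∃ m : ℕ, 0 < m ∧ x j ^ m = 1

/-- A primitive subgroup of `ℤ^n`: the quotient is torsion-free. -/
def IsPrimitiveLattice {n : ℕ} (A : Submodule ℤ (Fin n → ℤ)) : Prop :=
  ∀ (v : Fin n → ℤ) (k : ℤ), k ≠ 0 → k • v ∈ A → v ∈ A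

/-- `H_A = {x | x^a = 1 for all a ∈ A}`. -/
def subgroupH {n : ℕ} (A : Submodule ℤ (Fin n → ℤ)) : Set (Fin n → ℂˣ) :=
  {x | ∀ a ∈ A, vpow x a = 1}

/-- `C` is the torsion coset `ω · H_A`. -/
def IsTorsionCosetWith {n : ℕ} (ω : Fin n → ℂˣ) (A : Submodule ℤ (Fin n → ℤ))
    (C : Set (Fin n → ℂˣ)) : Prop :=
  IsTorsionPoint ω ∧ IsPrimitiveLattice A ∧ C = (fun h => ω * h) '' subgroupH A

def IsTorsionCoset {n : ℕ} (C : Set (Fin n → ℂˣ)) : Prop :=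
  ∃ ω A, IsTorsionCosetWith ω A C

/-- A torsion coset of dimension `i` (that is, `i = n - rank A`). -/
def IsTorsionCosetOfDim {n : ℕ} (i : ℕ) (C : Set (Fin n → ℂˣ)) : Prop :=
  ∃ ω A, IsTorsionCosetWith ω A C ∧ i = n - Module.finrank ℤ A

/-- `C` is a maximal torsion coset contained in `V`. -/
def IsMaximalTorsionCoset {n : ℕ} (V C : Set (Fin n → ℂˣ)) : Prop :=
  IsTorsionCoset C ∧ C ⊆ V ∧ ∀ C', IsTorsionCoset C' → C' ⊆ V → C ⊆ C' → C' = C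

def maximalTorsionCosets {n : ℕ} (V : Set (Fin n → ℂˣ)) : Set (Set (Fin n → ℂˣ)) :=
  {C | IsMaximalTorsionCoset V C}

/-- The hypersurface `H(f)` in `(ℂˣ)^n`. -/
def hyp {n : ℕ} (f : MvPolynomial (Fin n) ℂ) : Set (Fin n → ℂˣ) :=
  {x | MvPolynomial.eval (fun j => (x j : ℂ)) f = 0}

/-- `T n i f`: the number of `i`-dimensional maximal torsion cosets on `H(f)` in `(ℂˣ)^n`. -/
def T (n : ℕ) (i : ℕ) (f : MvPolynomial (Fin n) ℂ) : ℕ :=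
  Set.ncard {C | IsMaximalTorsionCoset (hyp f) C ∧ IsTorsionCosetOfDim i C}

/-- The exponent lattice `L(f)` of a polynomial `f`. -/
def expLattice {n : ℕ} (f : MvPolynomial (Fin n) ℂ) : Submodule ℤ (Fin n → ℤ) :=
  Submodule.span ℤ
    {w | ∃ u ∈ f.support, ∃ v ∈ f.support, w = fun j => (u j : ℤ) - (v j : ℤ)}


section Helpers

instance : Uncountable ℂ := Complex.equivRealProd.symm.injective.uncountable

lemma vpow_zero' {n : ℕ} (x : Fin n → ℂˣ) : vpow x 0 = 1 := by simp [vpow]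

lemma vpow_add' {n : ℕ} (x : Fin n → ℂˣ) (a b : Fin n → ℤ) :
    vpow x (a + b) = vpow x a * vpow x b := by
  simp [vpow, zpow_add, Finset.prod_mul_distrib]

lemma vpow_smul' {n : ℕ} (x : Fin n → ℂˣ) (c : ℤ) (a : Fin n → ℤ) :
    vpow x (c • a) = vpow x a ^ c := by
  simp [vpow, ← Finset.prod_zpow, ← zpow_mul, mul_comm]

lemma subgroupH_bot {n : ℕ} : subgroupH (⊥ : Submodule ℤ (Fin n → ℤ)) = Set.univ := by
  ext x
  simp only [subgroupH, Set.mem_setOf_eq, Submodule.mem_bot, Set.mem_univ, iff_true]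
  rintro a rfl
  exact vpow_zero' x

lemma isPrimitive_bot {n : ℕ} : IsPrimitiveLattice (⊥ : Submodule ℤ (Fin n → ℤ)) := by
  intro v k hk hkv
  simp only [Submodule.mem_bot] at *
  exact (smul_eq_zero.mp hkv).resolve_left hk

lemma isTorsionPoint_one {n : ℕ} : IsTorsionPoint (1 : Fin n → ℂˣ) :=
  fun _ => ⟨1, one_pos, one_pow 1⟩

lemma isTorsionCoset_univ {n : ℕ} : IsTorsionCoset (Set.univ : Set (Fin n → ℂˣ)) := by
  refine ⟨1, ⊥, isTorsionPoint_one, isPrimitive_bot, ?_⟩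
  rw [subgroupH_bot]
  ext x
  exact ⟨fun _ => ⟨x, trivial, one_mul x⟩, fun _ => trivial⟩

lemma maximalTorsionCosets_univ {n : ℕ} :
    maximalTorsionCosets (Set.univ : Set (Fin n → ℂˣ)) = {Set.univ} := by
  ext C
  constructor
  · rintro ⟨_, _, hmax⟩
    exact (hmax Set.univ isTorsionCoset_univ (subset_refl _) (Set.subset_univ _)).symm
  · rintro rfl
    exact ⟨isTorsionCoset_univ, subset_refl _,
      fun C' _ h' h'' => Set.Subset.antisymm h' h''⟩


lemma countable_rootsOfUnitySet : ({u : ℂˣ | ∃ m : ℕ, 0 < m ∧ u ^ m = 1}).Countable := by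
  have : {u : ℂˣ | ∃ m : ℕ, 0 < m ∧ u ^ m = 1} =
      ⋃ m ∈ {m : ℕ | 0 < m}, {u : ℂˣ | u ^ m = 1} := by
    ext u; simp [Set.mem_setOf_eq]
  rw [this]
  refine Set.Countable.biUnion (Set.to_countable _) (fun m hm => Set.Finite.countable ?_)
  have hfin : ({z : ℂ | z ^ m = 1}).Finite := by
    have hp : (Polynomial.X ^ m - Polynomial.C 1 : Polynomial ℂ) ≠ 0 :=
      Polynomial.X_pow_sub_C_ne_zero hm 1
    exact (Polynomial.finite_setOf_isRoot hp).subset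
      (by intro z hz; simp [Polynomial.IsRoot, hz.out])
  have : {u : ℂˣ | u ^ m = 1} ⊆ (Units.val) ⁻¹' {z : ℂ | z ^ m = 1} := by
    intro u hu
    simp only [Set.mem_preimage, Set.mem_setOf_eq]
    rw [← Units.val_pow_eq_pow_val, hu.out, Units.val_one]
  exact (hfin.preimage (fun a _ b _ h => Units.ext h)).subset this

lemma countable_torsionPoints {n : ℕ} : ({x : Fin n → ℂˣ | IsTorsionPoint x}).Countable := by
  have := Set.countable_pi (π := fun _ : Fin n => ℂˣ)
    (s := fun _ => {u : ℂˣ | ∃ m : ℕ, 0 < m ∧ u ^ m = 1})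
    (fun _ => countable_rootsOfUnitySet)
  exact this

instance countable_submodules (n : ℕ) : Countable (Submodule ℤ (Fin n → ℤ)) := by
  have hsurj : Function.Surjective
      (fun t : Finset (Fin n → ℤ) => Submodule.span ℤ (↑t : Set (Fin n → ℤ))) := by
    intro A
    obtain ⟨t, ht⟩ := (IsNoetherian.noetherian A : A.FG)
    exact ⟨t, ht⟩
  exact hsurj.countable

lemma countable_torsionCosets {n : ℕ} :
    ({C : Set (Fin n → ℂˣ) | IsTorsionCoset C}).Countable := by
  have hsub : {C : Set (Fin n → ℂˣ) | IsTorsionCoset C} ⊆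
      (fun p : (Fin n → ℂˣ) × Submodule ℤ (Fin n → ℤ) =>
         (fun h => p.1 * h) '' subgroupH p.2) ''
        ({x | IsTorsionPoint x} ×ˢ (Set.univ : Set (Submodule ℤ (Fin n → ℤ)))) := by
    rintro C ⟨ω, A, hω, _, hC⟩
    exact ⟨(ω, A), ⟨hω, trivial⟩, hC.symm⟩
  exact ((countable_torsionPoints.prod Set.countable_univ).image _).mono hsub


lemma vpow_single {n : ℕ} (x : Fin n → ℂˣ) (i0 : Fin n) (c : ℤ) :
    vpow x (Pi.single i0 c) = x i0 ^ c := by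
  unfold vpow
  rw [Finset.prod_eq_single i0]
  · simp
  · intro j _ hj; simp [Pi.single_apply, hj]
  · simp

lemma prim_span_single {n : ℕ} (i0 : Fin n) :
    IsPrimitiveLattice (Submodule.span ℤ {Pi.single i0 (1 : ℤ)}) := by
  intro v k hk hkv
  rw [Submodule.mem_span_singleton] at hkv ⊢
  obtain ⟨c, hc⟩ := hkv
  refine ⟨v i0, ?_⟩
  funext j
  rcases eq_or_ne j i0 with rfl | hj
  · simp
  · have h1 := congrFun hc j
    simp only [Pi.smul_apply, smul_eq_mul, Pi.single_apply, if_neg hj, mul_zero] at h1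
    have hvj : v j = 0 := by
      rcases mul_eq_zero.mp h1.symm with h | h
      · exact absurd h hk
      · exact h
    simp [Pi.single_apply, hj, hvj]

lemma subgroupH_span_single {n : ℕ} (i0 : Fin n) :
    subgroupH (Submodule.span ℤ {Pi.single i0 (1 : ℤ)}) = {x | x i0 = 1} := by
  ext x
  constructor
  · intro hx
    have := hx (Pi.single i0 1) (Submodule.subset_span rfl)
    rwa [vpow_single, zpow_one] at this
  · intro hx a ha
    rw [Submodule.mem_span_singleton] at ha
    obtain ⟨c, rfl⟩ := ha
    rw [vpow_smul', vpow_single, zpow_one, hx.out, one_zpow]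

lemma isTorsionCoset_K {n : ℕ} (i0 : Fin n) :
    IsTorsionCosetWith 1 (Submodule.span ℤ {Pi.single i0 (1 : ℤ)})
      {x : Fin n → ℂˣ | x i0 = 1} := by
  refine ⟨isTorsionPoint_one, prim_span_single i0, ?_⟩
  rw [subgroupH_span_single]
  ext x
  constructor
  · intro hx; exact ⟨x, hx, one_mul x⟩
  · rintro ⟨y, hy, rfl⟩; simpa using hy

lemma maximalTorsionCosets_K {n : ℕ} (i0 : Fin n) :
    maximalTorsionCosets {x : Fin n → ℂˣ | x i0 = 1} = {{x : Fin n → ℂˣ | x i0 = 1}} := by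
  have hK : IsTorsionCoset {x : Fin n → ℂˣ | x i0 = 1} := ⟨1, _, isTorsionCoset_K i0⟩
  ext C
  constructor
  · rintro ⟨_, hsub, hmax⟩
    exact (hmax _ hK (subset_refl _) hsub).symm
  · rintro rfl
    exact ⟨hK, subset_refl _, fun C' _ h' h'' => Set.Subset.antisymm h' h''⟩

lemma finrank_span_single {n : ℕ} (i0 : Fin n) :
    Module.finrank ℤ (Submodule.span ℤ ({Pi.single i0 (1:ℤ)} : Set (Fin n → ℤ))) = 1 := by
  set v : Fin n → ℤ := Pi.single i0 1 with hv
  have hvne : v ≠ 0 := by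
    intro h
    have := congrFun h i0
    simp [hv] at this
  have h1 : LinearIndependent ℤ (fun _ : ({v} : Set (Fin n → ℤ)) => v) :=
    linearIndependent_unique_iff.mpr (by simpa using hvne)
  have hli : LinearIndependent ℤ (Subtype.val : ({v} : Set (Fin n → ℤ)) → (Fin n → ℤ)) := by
    convert h1 using 2 with x
    exact x.2
  rw [finrank_span_set_eq_card hli, Set.toFinset_singleton, Finset.card_singleton]

lemma one_le_t {n d : ℕ} (hn : 2 ≤ n) (hd : 1 ≤ d) (t : ℕ)
    (ht : ∀ f : MvPolynomial (Fin n) ℂ, f.totalDegree ≤ d →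
      ∑ i ∈ Finset.range n, T n i f ≤ t) : 1 ≤ t := by
  have hn0 : 0 < n := by omega
  set i0 : Fin n := ⟨0, hn0⟩ with hi0
  set f : MvPolynomial (Fin n) ℂ := MvPolynomial.X i0 - 1 with hf
  have hdeg : f.totalDegree ≤ d := by
    have h1 : f.totalDegree ≤ 1 := by
      rw [hf, sub_eq_add_neg]
      refine le_trans (MvPolynomial.totalDegree_add _ _) ?_
      rw [MvPolynomial.totalDegree_neg]
      simp [MvPolynomial.totalDegree_X, MvPolynomial.totalDegree_one]
    omega
  have hhyp : hyp f = {x : Fin n → ℂˣ | x i0 = 1} := by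
    ext x
    simp only [hyp, hf, Set.mem_setOf_eq, map_sub, MvPolynomial.eval_X, map_one, sub_eq_zero]
    exact ⟨fun h => Units.ext h, fun h => by rw [h]; rfl⟩
  have hmax : maximalTorsionCosets (hyp f) = {hyp f} := by
    rw [hhyp]; exact maximalTorsionCosets_K i0
  have hslice : {C | IsMaximalTorsionCoset (hyp f) C ∧ IsTorsionCosetOfDim (n-1) C}
      = {hyp f} := by
    ext C
    constructor
    · rintro ⟨h1, _⟩
      have : C ∈ maximalTorsionCosets (hyp f) := h1
      rwa [hmax] at this
    · rintro rfl
      constructor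
      · have : hyp f ∈ maximalTorsionCosets (hyp f) := by rw [hmax]; rfl
        exact this
      · refine ⟨1, _, hhyp ▸ isTorsionCoset_K i0, ?_⟩
        rw [finrank_span_single]
  have hT : T n (n-1) f = 1 := by
    rw [T, hslice, Set.ncard_singleton]
  have hmem : n - 1 ∈ Finset.range n := Finset.mem_range.mpr (by omega)
  calc 1 = T n (n-1) f := hT.symm
    _ ≤ ∑ i ∈ Finset.range n, T n i f :=
        Finset.single_le_sum (f := fun i => T n i f) (fun i _ => Nat.zero_le _) hmem
    _ ≤ t := ht f hdeg

lemma one_le_N {n d N : ℕ}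
    (hN : ∀ s' : Finset (MvPolynomial (Fin (n - 1)) ℂ),
      (∀ g ∈ s', g.totalDegree ≤ n ^ (2 + n) * d ^ 2) →
      Set.ncard (maximalTorsionCosets
        {x : Fin (n - 1) → ℂˣ | ∀ g ∈ s', MvPolynomial.eval (fun j => (x j : ℂ)) g = 0}) ≤ N) :
    1 ≤ N := by
  have := hN ∅ (by simp)
  simp only [Finset.notMem_empty, false_implies, implies_true, Set.setOf_true] at this
  rwa [maximalTorsionCosets_univ, Set.ncard_singleton] at this

end Helpers



/-- Lemma 13 of the paper: `N_tor(n,d) ≤ T(n,d) · N_tor(n-1, n^{2+n}d²)`. -/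
theorem stmt16 (n d : ℕ) (hn : 2 ≤ n) (hd : 1 ≤ d)
    (s : Finset (MvPolynomial (Fin n) ℂ)) (hs : ∀ f ∈ s, f.totalDegree ≤ d)
    (t : ℕ)
    (ht : ∀ f : MvPolynomial (Fin n) ℂ, f.totalDegree ≤ d →
      ∑ i ∈ Finset.range n, T n i f ≤ t)
    (N : ℕ)
    (hN : ∀ s' : Finset (MvPolynomial (Fin (n - 1)) ℂ),
      (∀ g ∈ s', g.totalDegree ≤ n ^ (2 + n) * d ^ 2) →
      Set.ncard (maximalTorsionCosets
        {x : Fin (n - 1) → ℂˣ | ∀ g ∈ s', MvPolynomial.eval (fun j => (x j : ℂ)) g = 0}) ≤ N) :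
    Set.ncard (maximalTorsionCosets
      {x : Fin n → ℂˣ | ∀ f ∈ s, MvPolynomial.eval (fun j => (x j : ℂ)) f = 0}) ≤ t * N := by
  classical
  have hN1 : 1 ≤ N := one_le_N hN
  set V : Set (Fin n → ℂˣ) :=
    {x | ∀ f ∈ s, MvPolynomial.eval (fun j => (x j : ℂ)) f = 0} with hVdef
  by_cases hV : V = Set.univ
  · rw [hV, maximalTorsionCosets_univ, Set.ncard_singleton]
    have ht1 : 1 ≤ t := one_le_t hn hd t ht
    calc 1 = 1 * 1 := by ring
      _ ≤ t * N := Nat.mul_le_mul ht1 hN1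
  · set m := s.card with hm
    set e : Fin m → MvPolynomial (Fin n) ℂ := fun i => (s.equivFin.symm i : _) with he
    have hes : ∀ i, e i ∈ s := fun i => (s.equivFin.symm i).2
    set g : ℂ → MvPolynomial (Fin n) ℂ := fun c => ∑ i : Fin m, c ^ (i : ℕ) • e i with hg
    have hdeg : ∀ c, (g c).totalDegree ≤ d := by
      intro c
      refine le_trans (MvPolynomial.totalDegree_finset_sum _ _) (Finset.sup_le fun i _ => ?_)
      exact le_trans (MvPolynomial.totalDegree_smul_le _ _) (hs _ (hes i))
    have hVsub : ∀ c, V ⊆ hyp (g c) := by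
      intro c x hx
      show MvPolynomial.eval (fun j => (x j : ℂ)) (g c) = 0
      rw [hg]
      rw [map_sum]
      refine Finset.sum_eq_zero fun i _ => ?_
      rw [MvPolynomial.smul_eq_C_mul, map_mul, MvPolynomial.eval_C, hx (e i) (hes i), mul_zero]
    set Bad : Set ℂ := ⋃ C' ∈ {C' : Set (Fin n → ℂˣ) | IsTorsionCoset C' ∧ ¬C' ⊆ V},
      {c : ℂ | C' ⊆ hyp (g c)} with hBad
    have hBadC : Bad.Countable := by
      refine Set.Countable.biUnion (countable_torsionCosets.mono fun C hC => hC.1) ?_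
      rintro C' ⟨hC'tor, hC'nsub⟩
      obtain ⟨x₀, hx₀C, hx₀V⟩ := Set.not_subset.mp hC'nsub
      have hex : ∃ f ∈ s, MvPolynomial.eval (fun j => ((x₀ j : ℂ))) f ≠ 0 := by
        by_contra h
        push_neg at h
        exact hx₀V h
      obtain ⟨f0, hf0s, hf0⟩ := hex
      set xc : Fin n → ℂ := fun j => (x₀ j : ℂ) with hxc
      set p : Polynomial ℂ :=
        ∑ i : Fin m, Polynomial.C (MvPolynomial.eval xc (e i)) * Polynomial.X ^ (i : ℕ) with hp
      have hpcoeff : ∀ i0 : Fin m, p.coeff (i0 : ℕ) = MvPolynomial.eval xc (e i0) := by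
        intro i0
        rw [hp, Polynomial.finset_sum_coeff, Finset.sum_eq_single i0]
        · simp [Polynomial.coeff_C_mul, Polynomial.coeff_X_pow]
        · intro i _ hne
          have hne' : ¬((i0 : ℕ) = (i : ℕ)) := fun h => hne (Fin.val_injective h.symm)
          simp [Polynomial.coeff_C_mul, Polynomial.coeff_X_pow, hne']
        · simp
      have hpne : p ≠ 0 := by
        intro h0
        apply hf0
        have hco := hpcoeff (s.equivFin ⟨f0, hf0s⟩)
        rw [h0, Polynomial.coeff_zero] at hco
        have he0 : e (s.equivFin ⟨f0, hf0s⟩) = f0 := by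
          rw [he]
          exact congrArg Subtype.val (s.equivFin.symm_apply_apply ⟨f0, hf0s⟩)
        rw [he0] at hco
        exact hco.symm
      have hpev : ∀ c, Polynomial.eval c p = MvPolynomial.eval xc (g c) := by
        intro c
        rw [hp, hg, Polynomial.eval_finset_sum, map_sum]
        refine Finset.sum_congr rfl fun i _ => ?_
        rw [MvPolynomial.smul_eq_C_mul, map_mul, MvPolynomial.eval_C,
          Polynomial.eval_mul, Polynomial.eval_C, Polynomial.eval_pow, Polynomial.eval_X,
          mul_comm]
      refine Set.Countable.mono ?_ (Polynomial.finite_setOf_isRoot hpne).countable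
      intro c hc
      have hx : x₀ ∈ hyp (g c) := hc hx₀C
      show Polynomial.IsRoot p c
      rw [Polynomial.IsRoot, hpev c]
      exact hx
    have hexc : ∃ c₀ : ℂ, c₀ ∉ Bad := by
      by_contra hcon
      push_neg at hcon
      have h2 : (Set.univ : Set ℂ).Countable := by
        rw [← Set.eq_univ_of_forall hcon]
        exact hBadC
      exact not_countable (Set.countable_univ_iff.mp h2)
    obtain ⟨c₀, hc₀⟩ := hexc
    have hGood : ∀ C', IsTorsionCoset C' → C' ⊆ hyp (g c₀) → C' ⊆ V := by
      intro C' htor hsub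
      by_contra hnsub
      exact hc₀ (Set.mem_biUnion (⟨htor, hnsub⟩ :
        C' ∈ {C' : Set (Fin n → ℂˣ) | IsTorsionCoset C' ∧ ¬C' ⊆ V}) hsub)
    have hEq : maximalTorsionCosets V = maximalTorsionCosets (hyp (g c₀)) := by
      ext C
      constructor
      · rintro ⟨hCt, hCV, hCm⟩
        exact ⟨hCt, hCV.trans (hVsub c₀), fun C' h1 h2 h3 => hCm C' h1 (hGood C' h1 h2) h3⟩
      · rintro ⟨hCt, hCH, hCm⟩
        exact ⟨hCt, hGood C hCt hCH, fun C' h1 h2 h3 => hCm C' h1 (h2.trans (hVsub c₀)) h3⟩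
    rcases Set.finite_or_infinite (maximalTorsionCosets V) with hfin | hinf
    · set S : ℕ → Set (Set (Fin n → ℂˣ)) := fun i =>
        {C | IsMaximalTorsionCoset (hyp (g c₀)) C ∧ IsTorsionCosetOfDim i C} with hS
      have hSsub : ∀ i, S i ⊆ maximalTorsionCosets V := by
        intro i C hC
        rw [hEq]
        exact hC.1
      have hScov : ∀ C ∈ maximalTorsionCosets V, ∃ i ∈ Finset.range n, C ∈ S i := by
        intro C hC
        have hCH : IsMaximalTorsionCoset (hyp (g c₀)) C := by rw [hEq] at hC; exact hC
        obtain ⟨ω, A, hW⟩ := hCH.1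
        have hAne : A ≠ ⊥ := by
          rintro rfl
          apply hV
          apply Set.eq_univ_of_univ_subset
          have hCuniv : C = Set.univ := by
            rw [hW.2.2, subgroupH_bot]
            ext y
            constructor
            · intro _; trivial
            · intro _
              exact ⟨ω⁻¹ * y, trivial, mul_inv_cancel_left ω y⟩
          rw [← hCuniv]
          exact hC.2.1
        have hAfin : Module.Finite ℤ A := inferInstance
        have hpos : 0 < Module.finrank ℤ A := by
          have hnz := (Submodule.finrank_eq_zero (S := A)).not.mpr hAne
          omega
        exact ⟨n - Module.finrank ℤ A, Finset.mem_range.mpr (by omega),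
          hCH, ω, A, hW, rfl⟩
      have hSfin : ∀ i, (S i).Finite := fun i => hfin.subset (hSsub i)
      have hsub2 : hfin.toFinset ⊆ (Finset.range n).biUnion fun i => (hSfin i).toFinset := by
        intro C hC
        rw [Set.Finite.mem_toFinset] at hC
        obtain ⟨i, hi, hCi⟩ := hScov C hC
        exact Finset.mem_biUnion.mpr ⟨i, hi, (Set.Finite.mem_toFinset _).mpr hCi⟩
      calc (maximalTorsionCosets V).ncard
          = hfin.toFinset.card := Set.ncard_eq_toFinset_card _ hfin
        _ ≤ ((Finset.range n).biUnion fun i => (hSfin i).toFinset).card :=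
            Finset.card_le_card hsub2
        _ ≤ ∑ i ∈ Finset.range n, (hSfin i).toFinset.card := Finset.card_biUnion_le
        _ = ∑ i ∈ Finset.range n, T n i (g c₀) := by
            refine Finset.sum_congr rfl fun i _ => ?_
            rw [← Set.ncard_eq_toFinset_card _ (hSfin i)]
            rfl
        _ ≤ t := ht (g c₀) (hdeg c₀)
        _ ≤ t * N := Nat.le_mul_of_pos_right t (by omega)
    · rw [hinf.ncard]
      exact Nat.zero_le _
end
end

section
/- Let g ∈ ℂ[X] be a polynomial in one variable with g(0) ≠ 0, and suppose that for every α ∈ ℂ with g(α) = 0, at least one of g(α²) = 0 or g(−α²) = 0 holds. Then every zero of g is a root of unity; that is, for every α ∈ ℂ with g(α) = 0 there exists an integer m ≥ 1 with α^m = 1. -/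
/-- Lemma 1 (i) of Beukers–Smyth: if for each zero `α` of `g` one of `±α²` is also a zero
and `g(0) ≠ 0`, then all zeroes of `g` are roots of unity. -/
theorem stmt18 (g : Polynomial ℂ) (h0 : g.eval 0 ≠ 0)
    (hsq : ∀ α : ℂ, g.eval α = 0 → g.eval (α ^ 2) = 0 ∨ g.eval (-(α ^ 2)) = 0) :
    ∀ α : ℂ, g.eval α = 0 → ∃ m : ℕ, 1 ≤ m ∧ α ^ m = 1 := by
  intro α hα
  have hα0 : α ≠ 0 := by rintro rfl; exact h0 hα
  have hg : g ≠ 0 := by rintro rfl; exact h0 (by simp)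
  -- iterated sequence of roots
  let β : ℕ → ℂ := fun n => Nat.rec α
    (fun _ b => if g.eval (b ^ 2) = 0 then b ^ 2 else -(b ^ 2)) n
  have hβsucc : ∀ n, β (n + 1) = if g.eval ((β n) ^ 2) = 0 then (β n) ^ 2 else -((β n) ^ 2) :=
    fun n => rfl
  have hβroot : ∀ n, g.eval (β n) = 0 := by
    intro n
    induction n with
    | zero => exact hα
    | succ n ih =>
      rw [hβsucc]
      by_cases h : g.eval ((β n) ^ 2) = 0
      · simp [h]
      · rcases hsq (β n) ih with h' | h'
        · exact absurd h' h
        · simpa [h] using h'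
  have hβsq : ∀ n, (β n) ^ 2 = α ^ (2 ^ (n + 1)) := by
    intro n
    induction n with
    | zero => simp [β]
    | succ n ih =>
      have : (β (n + 1)) ^ 2 = ((β n) ^ 2) ^ 2 := by
        rw [hβsucc]; split <;> ring
      rw [this, ih, ← pow_mul]; ring_nf
  -- finitely many roots
  have hfin : {x : ℂ | g.IsRoot x}.Finite := Polynomial.finite_setOf_isRoot hg
  obtain ⟨i, j, hij, heq⟩ := hfin.exists_lt_map_eq_of_forall_mem (f := β)
    (fun n => hβroot n)
  have hpow : α ^ (2 ^ (i + 1)) = α ^ (2 ^ (j + 1)) := by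
    rw [← hβsq, ← hβsq, heq]
  have hlt : 2 ^ (i + 1) < 2 ^ (j + 1) := by
    exact Nat.pow_lt_pow_right one_lt_two (by omega)
  refine ⟨2 ^ (j + 1) - 2 ^ (i + 1), by omega, ?_⟩
  have : α ^ (2 ^ (i + 1)) * α ^ (2 ^ (j + 1) - 2 ^ (i + 1)) = α ^ (2 ^ (i + 1)) * 1 := by
    rw [← pow_add, mul_one, Nat.add_sub_cancel' hlt.le, hpow]
  exact mul_left_cancel₀ (pow_ne_zero _ hα0) this
end
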